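/- Let N ≥ 3, μ > 0, α < 0, let j be an integer with 0 ≤ j ≤ ⌊(N-1)/2⌋ and ω > α²/(N-2j)². Then the mass of the stationary state Φ_ω^j is M[Φ_ω^j] = ((μ+1)^{1/μ}/μ) ω^{1/μ - 1/2} [ (N-2j) ∫_{T}^{1} (1-t²)^{1/μ - 1} dt + 2j ∫_{0}^{1} (1-t²)^{1/μ - 1} dt ], where T = |α| / ((N-2j)√ω). -/

import Mathlib

open Real MeasureTheory

/-- `sech y = 1 / cosh y`. -/
noncomputable def sech (y : ℝ) : ℝ := 1 / Real.cosh y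

/-- Inverse hyperbolic tangent. -/
noncomputable def artanh (x : ℝ) : ℝ := (1 / 2) * Real.log ((1 + x) / (1 - x))

/-- The half-line soliton profile `φ_{ω,a}(x) = [(μ+1)ω]^{1/(2μ)} sech^{1/μ}(μ√ω (x-a))`. -/
noncomputable def solProfile (μ ω a : ℝ) (x : ℝ) : ℝ :=
  ((μ + 1) * ω) ^ (1 / (2 * μ)) * sech (μ * Real.sqrt ω * (x - a)) ^ (1 / μ)

/-- `a^j = (1/(μ√ω)) arctanh(|α|/((N-2j)√ω))`. -/
noncomputable def aCenter (μ α : ℝ) (N j : ℕ) (ω : ℝ) : ℝ :=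
  (1 / (μ * Real.sqrt ω)) * _root_.artanh (|α| / (((N : ℝ) - 2 * j) * Real.sqrt ω))

/-- The stationary state `Φ_ω^j` with `j` bumps. -/
noncomputable def statState (μ α : ℝ) (N j : ℕ) (ω : ℝ) : Fin N → ℝ → ℝ := fun i =>
  if (i : ℕ) < j then solProfile μ ω (aCenter μ α N j ω)
  else solProfile μ ω (-(aCenter μ α N j ω))

/-- The mass `M[Ψ] = Σ_i ∫_0^∞ |ψ_i|² dx` of the stationary state `Φ_ω^j`. -/
noncomputable def massState (μ α : ℝ) (N j : ℕ) (ω : ℝ) : ℝ :=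
  ∑ i : Fin N, ∫ x in Set.Ioi (0 : ℝ), |statState μ α N j ω i x| ^ 2


lemma tanh_exp (x : ℝ) : Real.tanh x = 1 - 2 / (Real.exp (2*x) + 1) := by
  rw [Real.tanh_eq_sinh_div_cosh, Real.sinh_eq, Real.cosh_eq]
  have h1 : Real.exp x ≠ 0 := (Real.exp_pos x).ne'
  have h2 : (0:ℝ) < Real.exp x + Real.exp (-x) := by positivity
  have h3 : (0:ℝ) < Real.exp (2*x) + 1 := by positivity
  have he : Real.exp (2*x) = Real.exp x * Real.exp x := by rw [two_mul, Real.exp_add]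
  have h4 : Real.exp (-x) = (Real.exp x)⁻¹ := Real.exp_neg x
  rw [he, h4]
  field_simp
  ring

lemma tanh_lt_one' (x : ℝ) : Real.tanh x < 1 := by
  rw [tanh_exp]
  have h3 : (0:ℝ) < Real.exp (2*x) + 1 := by positivity
  have : 0 < 2 / (Real.exp (2*x) + 1) := by positivity
  linarith

lemma neg_one_lt_tanh' (x : ℝ) : -1 < Real.tanh x := by
  rw [tanh_exp]
  have h3 : (0:ℝ) < Real.exp (2*x) + 1 := by positivity
  have : 2 / (Real.exp (2*x) + 1) < 2 := by
    rw [div_lt_iff₀ h3]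
    nlinarith [Real.exp_pos (2*x)]
  linarith

lemma tanh_mono : Monotone Real.tanh := by
  intro x y hxy
  rw [tanh_exp, tanh_exp]
  have h3 : (0:ℝ) < Real.exp (2*x) + 1 := by positivity
  have h4 : (0:ℝ) < Real.exp (2*y) + 1 := by positivity
  have : Real.exp (2*x) ≤ Real.exp (2*y) := Real.exp_le_exp.2 (by linarith)
  have : 2 / (Real.exp (2*y) + 1) ≤ 2 / (Real.exp (2*x) + 1) := by
    apply div_le_div_of_nonneg_left (by norm_num) h3 (by linarith)
  linarith

lemma tanh_tendsto : Filter.Tendsto Real.tanh Filter.atTop (nhds 1) := by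
  have h : Filter.Tendsto (fun x : ℝ => 1 - 2 / (Real.exp (2*x) + 1)) Filter.atTop (nhds 1) := by
    have h1 : Filter.Tendsto (fun x : ℝ => Real.exp (2*x) + 1) Filter.atTop Filter.atTop := by
      apply Filter.tendsto_atTop_add_const_right
      exact Real.tendsto_exp_atTop.comp (Filter.tendsto_id.const_mul_atTop two_pos)
    have h2 : Filter.Tendsto (fun x : ℝ => 2 / (Real.exp (2*x) + 1)) Filter.atTop (nhds 0) :=
      Filter.Tendsto.div_atTop tendsto_const_nhds h1
    simpa using (tendsto_const_nhds (x := (1:ℝ))).sub h2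
  exact h.congr (fun x => (tanh_exp x).symm)

lemma hasDerivAt_tanh' (x : ℝ) : HasDerivAt Real.tanh (1 / Real.cosh x ^ 2) x := by
  have h := (Real.hasDerivAt_sinh x).div (Real.hasDerivAt_cosh x) (Real.cosh_pos x).ne'
  have heq : Real.tanh = fun y => Real.sinh y / Real.cosh y :=
    funext fun y => Real.tanh_eq_sinh_div_cosh y
  rw [heq]
  have h' : HasDerivAt (fun y => Real.sinh y / Real.cosh y)
      ((Real.cosh x * Real.cosh x - Real.sinh x * Real.sinh x) / Real.cosh x ^ 2) x := h
  convert h' using 1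
  have := Real.cosh_sq_sub_sinh_sq x
  rw [← this]; ring

lemma one_sub_tanh_sq (x : ℝ) : 1 - Real.tanh x ^ 2 = 1 / Real.cosh x ^ 2 := by
  rw [Real.tanh_eq_sinh_div_cosh]
  have hc : Real.cosh x ≠ 0 := (Real.cosh_pos x).ne'
  have := Real.cosh_sq_sub_sinh_sq x
  field_simp
  linarith [this]

lemma tanh_artanh' {T : ℝ} (h1 : -1 < T) (h2 : T < 1) :
    Real.tanh ((1/2) * Real.log ((1 + T) / (1 - T))) = T := by
  have hr : (0:ℝ) < (1 + T) / (1 - T) := by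
    apply div_pos <;> linarith
  rw [tanh_exp]
  have : 2 * ((1/2) * Real.log ((1 + T) / (1 - T))) = Real.log ((1 + T) / (1 - T)) := by ring
  rw [this, Real.exp_log hr]
  have hT : (1:ℝ) - T ≠ 0 := by linarith
  have : (1 + T) / (1 - T) + 1 = 2 / (1 - T) := by field_simp; ring
  rw [this, div_div_eq_mul_div]
  field_simp
  ring


lemma sech_pos (y : ℝ) : 0 < sech y := by
  unfold sech; positivity

lemma sech_le (y : ℝ) : sech y ≤ 2 * Real.exp (-y) := by
  unfold sech
  rw [Real.cosh_eq]
  have h1 : (0:ℝ) < Real.exp y + Real.exp (-y) := by positivity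
  rw [one_div, inv_le_iff_one_le_mul₀ (by positivity)]
  have := Real.exp_pos (-y)
  have h2 : Real.exp (-y) * Real.exp y = 1 := by rw [← Real.exp_add]; simp
  nlinarith [Real.exp_pos y, sq_nonneg (Real.exp (-y))]

lemma continuous_sech : Continuous sech :=
  continuous_const.div Real.continuous_cosh (fun y => (Real.cosh_pos y).ne')

lemma integrableOn_sech_rpow {p c : ℝ} (hp : 0 < p) (hc : 0 < c) (a : ℝ) :
    IntegrableOn (fun x => sech (c * (x - a)) ^ (2 * p)) (Set.Ioi (0:ℝ)) := by
  have hcont : Continuous fun x => sech (c * (x - a)) ^ (2 * p) := by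
    apply Continuous.rpow_const
    · exact continuous_sech.comp (continuous_const.mul (continuous_id.sub continuous_const))
    · intro x; exact Or.inl (sech_pos _).ne'
  have hbound : ∀ x : ℝ, ‖sech (c * (x - a)) ^ (2 * p)‖ ≤
      (2 * Real.exp (c * a)) ^ (2 * p) * Real.exp (-(2 * p * c) * x) := by
    intro x
    rw [Real.norm_eq_abs, abs_of_nonneg (Real.rpow_nonneg (sech_pos _).le _)]
    have h1 : sech (c * (x - a)) ≤ 2 * Real.exp (c * a) * Real.exp (-c * x) := by
      have := sech_le (c * (x - a))
      calc sech (c * (x - a)) ≤ 2 * Real.exp (-(c * (x - a))) := this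
        _ = 2 * Real.exp (c * a) * Real.exp (-c * x) := by
            rw [mul_assoc, ← Real.exp_add]; ring_nf
    calc sech (c * (x - a)) ^ (2 * p)
        ≤ (2 * Real.exp (c * a) * Real.exp (-c * x)) ^ (2 * p) :=
          Real.rpow_le_rpow (sech_pos _).le h1 (by positivity)
      _ = (2 * Real.exp (c * a)) ^ (2 * p) * Real.exp (-(2 * p * c) * x) := by
          rw [Real.mul_rpow (by positivity) (Real.exp_pos _).le, ← Real.exp_mul]
          ring_nf
  have hint : IntegrableOn
      (fun x => (2 * Real.exp (c * a)) ^ (2 * p) * Real.exp (-(2 * p * c) * x))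
      (Set.Ioi (0:ℝ)) := by
    apply Integrable.const_mul
    exact exp_neg_integrableOn_Ioi 0 (by positivity)
  exact hint.mono' hcont.aestronglyMeasurable.restrict
    (Filter.Eventually.of_forall fun x => hbound x)

lemma intervalIntegrable_g {p A : ℝ} (hp : 0 < p) (hA1 : -1 < A) (hA2 : A ≤ 1) :
    IntervalIntegrable (fun t : ℝ => (1 - t ^ 2) ^ (p - 1)) volume A 1 := by
  rw [intervalIntegrable_iff_integrableOn_Ioc_of_le hA2]
  have h1 : IntervalIntegrable (fun t : ℝ => (1 - t) ^ (p - 1)) volume A 1 := by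
    have := (intervalIntegral.intervalIntegrable_rpow' (a := 0) (b := 1 - A)
      (by linarith : (-1:ℝ) < p - 1)).comp_sub_left 1
    simpa using this.symm
  have h2 : ContinuousOn (fun t : ℝ => (1 + t) ^ (p - 1)) (Set.uIcc A 1) := by
    apply ContinuousOn.rpow_const
    · exact (continuous_const.add continuous_id).continuousOn
    · intro t ht
      rw [Set.uIcc_of_le hA2] at ht
      have h1t : 0 < 1 + t := by have := ht.1; linarith
      exact Or.inl h1t.ne'
  have h3 := h1.mul_continuousOn h2
  rw [intervalIntegrable_iff_integrableOn_Ioc_of_le hA2] at h3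
  apply h3.congr_fun ?_ measurableSet_Ioc
  intro t ht
  have ht1 : t ≤ 1 := ht.2
  have ht2 : -1 < t := lt_trans hA1 ht.1
  have heq : (1:ℝ) - t ^ 2 = (1 - t) * (1 + t) := by ring
  simp only []
  rw [heq, Real.mul_rpow (by linarith) (by linarith)]

lemma sech_pow_eq (y p : ℝ) :
    (1 - Real.tanh y ^ 2) ^ (p - 1) * (1 / Real.cosh y ^ 2) = sech y ^ (2 * p) := by
  rw [one_sub_tanh_sq]
  have hcy : (0:ℝ) < Real.cosh y := Real.cosh_pos y
  have h1 : 1 / Real.cosh y ^ 2 = sech y ^ (2:ℕ) := by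
    unfold sech; rw [div_pow]; norm_num
  rw [h1]
  have hs : (0:ℝ) < sech y := sech_pos y
  rw [← Real.rpow_natCast (sech y) 2]
  rw [← Real.rpow_mul hs.le, ← Real.rpow_add hs]
  norm_num
  ring_nf

lemma key_sub {p c : ℝ} (hp : 0 < p) (hc : 0 < c) (a : ℝ) :
    ∫ x in Set.Ioi (0:ℝ), sech (c * (x - a)) ^ (2 * p)
      = c⁻¹ * ∫ t in Real.tanh (-(c * a))..(1:ℝ), (1 - t ^ 2) ^ (p - 1) := by
  set T0 : ℝ := Real.tanh (-(c * a)) with hT0def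
  set g : ℝ → ℝ := fun t => (1 - t ^ 2) ^ (p - 1) with hgdef
  set F : ℝ → ℝ := fun b => ∫ t in T0..b, g t with hFdef
  have hT0a : -1 < T0 := neg_one_lt_tanh' _
  have hT0b : T0 < 1 := tanh_lt_one' _
  -- step 1 : finite-interval substitution
  have step1 : ∀ R : ℝ, (∫ x in (0:ℝ)..R, c * sech (c * (x - a)) ^ (2 * p))
      = F (Real.tanh (c * (R - a))) := by
    intro R
    have hderiv : ∀ x ∈ Set.uIcc (0:ℝ) R,
        HasDerivAt (fun x => Real.tanh (c * (x - a)))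
          (1 / Real.cosh (c * (x - a)) ^ 2 * c) x := by
      intro x _
      have h1 : HasDerivAt (fun x : ℝ => c * (x - a)) c x := by
        simpa using ((hasDerivAt_id x).sub_const a).const_mul c
      exact (hasDerivAt_tanh' (c * (x - a))).comp x h1
    have hcont : ContinuousOn (fun x => 1 / Real.cosh (c * (x - a)) ^ 2 * c)
        (Set.uIcc (0:ℝ) R) := by
      apply Continuous.continuousOn
      apply Continuous.mul _ continuous_const
      apply continuous_const.div
      · exact (Real.continuous_cosh.comp
          (continuous_const.mul (continuous_id.sub continuous_const))).pow 2
      · intro x; positivity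
    have hg : ContinuousOn g ((fun x => Real.tanh (c * (x - a))) '' Set.uIcc (0:ℝ) R) := by
      apply ContinuousOn.mono (s := Set.Ioo (-1:ℝ) 1)
      · apply ContinuousOn.rpow_const
        · exact (continuous_const.sub (continuous_pow 2)).continuousOn
        · rintro t ⟨ht1, ht2⟩
          exact Or.inl (by nlinarith)
      · rintro _ ⟨x, -, rfl⟩
        exact ⟨neg_one_lt_tanh' _, tanh_lt_one' _⟩
    have hsub := intervalIntegral.integral_comp_smul_deriv' hderiv hcont hg
    have hlhs : (∫ x in (0:ℝ)..R,
          (1 / Real.cosh (c * (x - a)) ^ 2 * c) • (g ∘ fun x => Real.tanh (c * (x - a))) x)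
        = ∫ x in (0:ℝ)..R, c * sech (c * (x - a)) ^ (2 * p) := by
      apply intervalIntegral.integral_congr
      intro x _
      show (1 / Real.cosh (c * (x - a)) ^ 2 * c) * g (Real.tanh (c * (x - a))) = _
      rw [hgdef]
      have := sech_pow_eq (c * (x - a)) p
      simp only []
      nlinarith [this]
    rw [hlhs] at hsub
    rw [hsub]
    have h0 : Real.tanh (c * ((0:ℝ) - a)) = T0 := by rw [hT0def]; ring_nf
    rw [h0]
  -- integrability of g on [T0, 1]
  have hgI : IntervalIntegrable g volume T0 1 := intervalIntegrable_g hp hT0a hT0b.le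
  have hgI' : IntegrableOn g (Set.uIcc T0 1) volume := by
    rw [Set.uIcc_of_le hT0b.le, integrableOn_Icc_iff_integrableOn_Ioc]
    exact (intervalIntegrable_iff_integrableOn_Ioc_of_le hT0b.le).mp hgI
  -- step 2 : LHS limit
  have hci : IntegrableOn (fun x => c * sech (c * (x - a)) ^ (2 * p)) (Set.Ioi (0:ℝ)) :=
    (integrableOn_sech_rpow hp hc a).const_mul c
  have step2 : Filter.Tendsto (fun R : ℝ => ∫ x in (0:ℝ)..R, c * sech (c * (x - a)) ^ (2 * p))
      Filter.atTop (nhds (∫ x in Set.Ioi (0:ℝ), c * sech (c * (x - a)) ^ (2 * p))) :=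
    intervalIntegral_tendsto_integral_Ioi 0 hci Filter.tendsto_id
  -- step 3 : RHS limit
  have hFcont : ContinuousOn F (Set.uIcc T0 1) :=
    intervalIntegral.continuousOn_primitive_interval hgI'
  have hcw : ContinuousWithinAt F (Set.uIcc T0 1) 1 := hFcont 1 Set.right_mem_uIcc
  have htend : Filter.Tendsto (fun R : ℝ => Real.tanh (c * (R - a))) Filter.atTop
      (nhdsWithin 1 (Set.uIcc T0 1)) := by
    rw [tendsto_nhdsWithin_iff]
    constructor
    · apply tanh_tendsto.comp
      have : Filter.Tendsto (fun R : ℝ => c * (R - a)) Filter.atTop Filter.atTop := by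
        apply Filter.Tendsto.const_mul_atTop hc
        exact Filter.tendsto_atTop_add_const_right _ (-a) Filter.tendsto_id
      exact this
    · filter_upwards [Filter.eventually_ge_atTop (0:ℝ)] with R hR
      rw [Set.uIcc_of_le hT0b.le]
      constructor
      · exact tanh_mono (by nlinarith)
      · exact (tanh_lt_one' _).le
  have step3 : Filter.Tendsto (fun R : ℝ => F (Real.tanh (c * (R - a)))) Filter.atTop
      (nhds (F 1)) := hcw.tendsto.comp htend
  have key : (∫ x in Set.Ioi (0:ℝ), c * sech (c * (x - a)) ^ (2 * p)) = F 1 := by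
    apply tendsto_nhds_unique step2
    exact (Filter.Tendsto.congr (fun R => (step1 R).symm) step3)
  rw [MeasureTheory.integral_const_mul] at key
  rw [hFdef] at key
  field_simp at key ⊢
  linarith [key]

lemma comp_integral {μ ω : ℝ} (hμ : 0 < μ) (hω : 0 < ω) (a : ℝ) :
    ∫ x in Set.Ioi (0:ℝ), |solProfile μ ω a x| ^ 2
      = ((μ + 1) * ω) ^ (1 / μ) *
        ((μ * Real.sqrt ω)⁻¹ *
          ∫ t in Real.tanh (-(μ * Real.sqrt ω * a))..(1:ℝ), (1 - t ^ 2) ^ (1 / μ - 1)) := by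
  have hA : (0:ℝ) < (μ + 1) * ω := by nlinarith
  have hc : (0:ℝ) < μ * Real.sqrt ω := by positivity
  have hpt : (fun x => |solProfile μ ω a x| ^ 2)
      = fun x => ((μ + 1) * ω) ^ (1 / μ) *
          sech (μ * Real.sqrt ω * (x - a)) ^ (2 * (1 / μ)) := by
    funext x
    have hs : (0:ℝ) < sech (μ * Real.sqrt ω * (x - a)) := sech_pos _
    have habs : |solProfile μ ω a x| = solProfile μ ω a x := by
      apply abs_of_nonneg
      unfold solProfile
      positivity
    rw [habs]
    unfold solProfile
    rw [mul_pow]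
    have hsq : ∀ (y r : ℝ), 0 < y → (y ^ r) ^ 2 = y ^ (2 * r) := by
      intro y r hy
      rw [sq, ← Real.rpow_add hy]; ring_nf
    rw [hsq _ _ hA, hsq _ _ hs]
    have : 2 * (1 / (2 * μ)) = 1 / μ := by field_simp
    rw [this]
  rw [hpt, MeasureTheory.integral_const_mul]
  rw [key_sub (by positivity : (0:ℝ) < 1 / μ) hc a]


/-- the mass of `Φ_ω^j` equals
`((μ+1)^{1/μ}/μ) ω^{1/μ-1/2} [(N-2j) ∫_T^1 (1-t²)^{1/μ-1} dt + 2j ∫_0^1 (1-t²)^{1/μ-1} dt]`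
with `T = |α|/((N-2j)√ω)`. -/
theorem mass_of_statState (N : ℕ) (hN : 3 ≤ N) (μ α : ℝ) (hμ : 0 < μ) (hα : α < 0)
    (j : ℕ) (hj : j ≤ (N - 1) / 2) (ω : ℝ) (hω : α ^ 2 / ((N : ℝ) - 2 * j) ^ 2 < ω) :
    massState μ α N j ω
      = ((μ + 1) ^ (1 / μ) / μ) * ω ^ (1 / μ - 1 / 2) *
        (((N : ℝ) - 2 * j) *
            (∫ t in (|α| / (((N : ℝ) - 2 * j) * Real.sqrt ω))..(1 : ℝ),
              (1 - t ^ 2) ^ (1 / μ - 1))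
          + 2 * j * (∫ t in (0 : ℝ)..(1 : ℝ), (1 - t ^ 2) ^ (1 / μ - 1))) := by
  -- basic numeric facts
  have hjN' : j * 2 ≤ N - 1 := (Nat.le_div_iff_mul_le two_pos).mp hj
  have hjN : j ≤ N := by omega
  have hNj1 : (1:ℝ) ≤ (N:ℝ) - 2 * j := by
    have h1 : (j:ℝ) * 2 ≤ (N:ℝ) - 1 := by
      have := (Nat.cast_le (α := ℝ)).mpr hjN'
      rwa [Nat.cast_mul, Nat.cast_sub (by omega : 1 ≤ N), Nat.cast_ofNat, Nat.cast_one] at this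
    linarith
  have hα2 : (0:ℝ) < α ^ 2 := by nlinarith
  have hNj0 : (0:ℝ) < (N:ℝ) - 2 * j := by linarith
  have hω0 : (0:ℝ) < ω := lt_trans (div_pos hα2 (pow_pos hNj0 2)) hω
  have hsω : (0:ℝ) < Real.sqrt ω := Real.sqrt_pos.mpr hω0
  have hc : (0:ℝ) < μ * Real.sqrt ω := by positivity
  set T : ℝ := |α| / (((N : ℝ) - 2 * j) * Real.sqrt ω) with hTdef
  have hT0 : 0 < T := by
    exact div_pos (abs_pos.mpr hα.ne) (mul_pos hNj0 hsω)
  have hT1 : T < 1 := by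
    rw [hTdef, div_lt_one (mul_pos hNj0 hsω)]
    have h1 : α ^ 2 < (((N:ℝ) - 2 * j) * Real.sqrt ω) ^ 2 := by
      rw [mul_pow, Real.sq_sqrt hω0.le]
      calc α ^ 2 = α ^ 2 / ((N:ℝ) - 2 * j) ^ 2 * ((N:ℝ) - 2 * j) ^ 2 := by
            field_simp
        _ < ω * ((N:ℝ) - 2 * j) ^ 2 := by
            apply mul_lt_mul_of_pos_right hω (pow_pos hNj0 2)
        _ = ((N:ℝ) - 2 * j) ^ 2 * ω := by ring
    calc |α| = Real.sqrt (α ^ 2) := (Real.sqrt_sq_eq_abs α).symm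
      _ < Real.sqrt ((((N:ℝ) - 2 * j) * Real.sqrt ω) ^ 2) := by
          exact Real.sqrt_lt_sqrt (by positivity) h1
      _ = ((N:ℝ) - 2 * j) * Real.sqrt ω := by
          rw [Real.sqrt_sq (mul_pos hNj0 hsω).le]
  have hTm1 : (-1:ℝ) < T := by linarith
  have hp : (0:ℝ) < 1 / μ := by positivity
  have hart : Real.tanh (μ * Real.sqrt ω * aCenter μ α N j ω) = T := by
    have hmul : μ * Real.sqrt ω * aCenter μ α N j ω
        = _root_.artanh T := by
      unfold aCenter
      rw [← hTdef]
      field_simp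
    rw [hmul]
    unfold _root_.artanh
    exact tanh_artanh' hTm1 hT1
  set g : ℝ → ℝ := fun t => (1 - t ^ 2) ^ (1 / μ - 1) with hgdef
  set A1 : ℝ := ∫ t in (-T)..(1:ℝ), g t with hA1def
  set A2 : ℝ := ∫ t in T..(1:ℝ), g t with hA2def
  set A0 : ℝ := ∫ t in (0:ℝ)..(1:ℝ), g t with hA0def
  set K : ℝ := ((μ + 1) * ω) ^ (1 / μ) with hKdef
  set cc : ℝ := μ * Real.sqrt ω with hccdef
  -- the two component integrals
  have hI1 : (∫ x in Set.Ioi (0:ℝ), |solProfile μ ω (aCenter μ α N j ω) x| ^ 2)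
      = K * (cc⁻¹ * A1) := by
    rw [comp_integral hμ hω0]
    have h0 : Real.tanh (-(μ * Real.sqrt ω * aCenter μ α N j ω)) = -T := by
      rw [Real.tanh_neg, hart]
    rw [h0]
  have hI2 : (∫ x in Set.Ioi (0:ℝ), |solProfile μ ω (-(aCenter μ α N j ω)) x| ^ 2)
      = K * (cc⁻¹ * A2) := by
    rw [comp_integral hμ hω0]
    have h0 : Real.tanh (-(μ * Real.sqrt ω * -(aCenter μ α N j ω))) = T := by
      rw [mul_neg, neg_neg, hart]
    rw [h0]
  -- sum over components
  have hterm : ∀ i : Fin N, (∫ x in Set.Ioi (0:ℝ), |statState μ α N j ω i x| ^ 2)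
      = if (i : ℕ) < j then K * (cc⁻¹ * A1) else K * (cc⁻¹ * A2) := by
    intro i
    by_cases h : (i : ℕ) < j
    · rw [if_pos h, ← hI1]
      congr 1
      funext x
      simp [statState, h]
    · rw [if_neg h, ← hI2]
      congr 1
      funext x
      simp [statState, h]
  have hmass : massState μ α N j ω
      = (j : ℝ) * (K * (cc⁻¹ * A1)) + ((N : ℝ) - (j : ℝ)) * (K * (cc⁻¹ * A2)) := by
    unfold massState
    rw [Finset.sum_congr rfl (fun i _ => hterm i)]
    rw [Fin.sum_univ_eq_sum_range (fun i => if i < j then K * (cc⁻¹ * A1) else K * (cc⁻¹ * A2))]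
    rw [Finset.range_eq_Ico, ← Finset.sum_Ico_consecutive _ (Nat.zero_le j) hjN]
    have e1 : (∑ i ∈ Finset.Ico 0 j, if i < j then K * (cc⁻¹ * A1) else K * (cc⁻¹ * A2))
        = (j : ℝ) * (K * (cc⁻¹ * A1)) := by
      rw [Finset.sum_congr rfl (fun i hi => if_pos (Finset.mem_Ico.mp hi).2)]
      rw [Finset.sum_const, Nat.card_Ico, Nat.sub_zero, nsmul_eq_mul]
    have e2 : (∑ i ∈ Finset.Ico j N, if i < j then K * (cc⁻¹ * A1) else K * (cc⁻¹ * A2))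
        = ((N : ℝ) - (j : ℝ)) * (K * (cc⁻¹ * A2)) := by
      rw [Finset.sum_congr rfl (fun i hi => if_neg (not_lt.mpr (Finset.mem_Ico.mp hi).1))]
      rw [Finset.sum_const, Nat.card_Ico, nsmul_eq_mul, Nat.cast_sub hjN]
    rw [e1, e2]
  -- symmetry of the integrand
  have hM : IntervalIntegrable g volume (-T) 1 :=
    intervalIntegrable_g hp (by linarith) (by linarith)
  have hsubI : ∀ u v : ℝ, -T ≤ u → u ≤ 1 → -T ≤ v → v ≤ 1 → IntervalIntegrable g volume u v := by
    intro u v hu1 hu2 hv1 hv2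
    apply hM.mono_set
    rw [Set.uIcc_of_le (by linarith : -T ≤ (1:ℝ))]
    apply Set.uIcc_subset_Icc <;> constructor <;> linarith
  have hadd1 : (∫ t in (-T)..(0:ℝ), g t) + (∫ t in (0:ℝ)..(1:ℝ), g t) = A1 :=
    intervalIntegral.integral_add_adjacent_intervals
      (hsubI _ _ le_rfl (by linarith) (by linarith) (by linarith))
      (hsubI _ _ (by linarith) (by linarith) (by linarith) le_rfl)
  have hadd2 : (∫ t in (0:ℝ)..T, g t) + (∫ t in T..(1:ℝ), g t) = A0 :=
    intervalIntegral.integral_add_adjacent_intervals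
      (hsubI _ _ (by linarith) (by linarith) (by linarith) (by linarith))
      (hsubI _ _ (by linarith) (by linarith) (by linarith) le_rfl)
  have hrefl : (∫ t in (-T)..(0:ℝ), g t) = ∫ t in (0:ℝ)..T, g t := by
    have h := intervalIntegral.integral_comp_neg (a := (0:ℝ)) (b := T) g
    rw [neg_zero] at h
    rw [← h]
    apply intervalIntegral.integral_congr
    intro t _
    simp [hgdef]
  have hA1eq : A1 = 2 * A0 - A2 := by
    linarith [hadd1, hadd2, hrefl, hA0def, hA1def, hA2def]
  -- prefactor computation
  have hKc : K * cc⁻¹ = ((μ + 1) ^ (1 / μ) / μ) * ω ^ (1 / μ - 1 / 2) := by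
    rw [hKdef, hccdef, Real.mul_rpow (by linarith : (0:ℝ) ≤ μ + 1) hω0.le,
      Real.sqrt_eq_rpow, mul_inv]
    have h1 : ω ^ (1 / μ : ℝ) * (ω ^ ((1:ℝ) / 2))⁻¹ = ω ^ (1 / μ - 1 / 2 : ℝ) := by
      rw [← Real.rpow_neg hω0.le, ← Real.rpow_add hω0]
      ring_nf
    calc (μ + 1) ^ (1 / μ) * ω ^ (1 / μ) * (μ⁻¹ * (ω ^ ((1:ℝ)/2))⁻¹)
        = (μ + 1) ^ (1 / μ) * μ⁻¹ * (ω ^ (1 / μ : ℝ) * (ω ^ ((1:ℝ)/2))⁻¹) := by ring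
      _ = ((μ + 1) ^ (1 / μ) / μ) * ω ^ (1 / μ - 1 / 2) := by rw [h1]; ring
  -- finish
  rw [hmass, hA1eq, ← hKc]
  ring
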